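/- For the 6th-order central weights (1/60,-8/60,37/60,37/60,-8/60,1/60), the modified wavenumber satisfies Φ(φ) = φ + O(φ⁷) as φ → 0. -/

import Mathlib

noncomputable def Tp (z : ℂ) : ℂ := ∑ j ∈ Finset.range 7, z ^ j / (Nat.factorial j)

lemma exp_remainder {z : ℂ} (hz : ‖z‖ ≤ 1) :
    ‖Complex.exp z - Tp z‖ ≤ ‖z‖ ^ 7 := by
  have h := Complex.exp_bound hz (by norm_num : 0 < 7)
  rw [Tp]
  have h0 : (0:ℝ) ≤ ‖z‖ ^ 7 := by positivity
  norm_num [Nat.factorial] at h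
  nlinarith [h, h0]

lemma rem_bound {m φ : ℝ} (hm : |m| ≤ 3) (hφ : |φ| ≤ 1/3) :
    ‖Complex.exp (Complex.I * (m:ℂ) * (φ:ℂ)) - Tp (Complex.I * m * φ)‖ ≤ 2187 * |φ|^7 := by
  have habs : ‖Complex.I * (m:ℂ) * (φ:ℂ)‖ = |m| * |φ| := by
    simp [map_mul, Complex.norm_real]
  have h1 : ‖Complex.I * (m:ℂ) * (φ:ℂ)‖ ≤ 1 := by
    rw [habs]
    nlinarith [abs_nonneg m, abs_nonneg φ]
  refine (exp_remainder h1).trans ?_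
  rw [habs]
  calc (|m| * |φ|)^7 ≤ (3 * |φ|)^7 := by
        gcongr
    _ = 2187 * |φ|^7 := by ring

lemma hT (φ : ℂ) :
    -Complex.I * ((1/60 : ℂ) * (Tp (Complex.I * (-2) * φ) - Tp (Complex.I * (-3) * φ))
      + (-8/60 : ℂ) * (Tp (Complex.I * (-1) * φ) - Tp (Complex.I * (-2) * φ))
      + (37/60 : ℂ) * (Tp (Complex.I * 0 * φ) - Tp (Complex.I * (-1) * φ))
      + (37/60 : ℂ) * (Tp (Complex.I * 1 * φ) - Tp (Complex.I * 0 * φ))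
      + (-8/60 : ℂ) * (Tp (Complex.I * 2 * φ) - Tp (Complex.I * 1 * φ))
      + (1/60 : ℂ) * (Tp (Complex.I * 3 * φ) - Tp (Complex.I * 2 * φ))) = φ := by
  simp only [Tp, Finset.sum_range_succ, Finset.sum_range_zero]
  norm_num
  ring_nf
  simp [Complex.I_sq]

theorem stmt_12 :
    let w : Fin 6 → ℝ := ![1/60, -8/60, 37/60, 37/60, -8/60, 1/60]
    let Φ : ℝ → ℂ := fun φ =>
      -Complex.I * (∑ l : Fin 6, (w l : ℂ) *
          Complex.exp (Complex.I * (((l : ℕ) : ℂ) + 1 - 3) * (φ : ℂ))) *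
        (1 - Complex.exp (-Complex.I * (φ : ℂ)))
    (fun φ : ℝ => Φ φ - (φ : ℂ)) =O[nhds (0 : ℝ)] fun φ : ℝ => φ ^ 7 := by
  intro w Φ
  have key : ∀ φ : ℝ, Φ φ =
      -Complex.I * ((1/60 : ℂ) * Complex.exp (Complex.I * (-2) * φ)
        + (-8/60 : ℂ) * Complex.exp (Complex.I * (-1) * φ)
        + (37/60 : ℂ) * Complex.exp (Complex.I * 0 * φ)
        + (37/60 : ℂ) * Complex.exp (Complex.I * 1 * φ)
        + (-8/60 : ℂ) * Complex.exp (Complex.I * 2 * φ)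
        + (1/60 : ℂ) * Complex.exp (Complex.I * 3 * φ))
      * (1 - Complex.exp (-Complex.I * φ)) := by
    intro φ
    simp only [Φ, Fin.sum_univ_six,
      show w 0 = 1/60 from rfl, show w 1 = -8/60 from rfl, show w 2 = 37/60 from rfl,
      show w 3 = 37/60 from rfl, show w 4 = -8/60 from rfl, show w 5 = 1/60 from rfl,
      show (((0:Fin 6):ℕ)) = 0 from rfl, show (((1:Fin 6):ℕ)) = 1 from rfl,
      show (((2:Fin 6):ℕ)) = 2 from rfl, show (((3:Fin 6):ℕ)) = 3 from rfl,
      show (((4:Fin 6):ℕ)) = 4 from rfl, show (((5:Fin 6):ℕ)) = 5 from rfl]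
    push_cast
    ring_nf
  rw [Asymptotics.isBigO_iff]
  refine ⟨8748, ?_⟩
  filter_upwards [Metric.ball_mem_nhds (0:ℝ) (by norm_num : (0:ℝ) < 1/3)] with φ hφmem
  have hφ : |φ| ≤ 1/3 := by
    have := Metric.mem_ball.mp hφmem
    rw [Real.dist_eq, sub_zero] at this
    linarith
  -- exp product identities
  have h2 : Complex.exp (Complex.I * (-2) * (φ:ℂ)) * Complex.exp (-Complex.I * φ)
      = Complex.exp (Complex.I * (-3) * (φ:ℂ)) := by
    rw [← Complex.exp_add]; congr 1; ring
  have h1 : Complex.exp (Complex.I * (-1) * (φ:ℂ)) * Complex.exp (-Complex.I * φ)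
      = Complex.exp (Complex.I * (-2) * (φ:ℂ)) := by
    rw [← Complex.exp_add]; congr 1; ring
  have h0 : Complex.exp (Complex.I * 0 * (φ:ℂ)) * Complex.exp (-Complex.I * φ)
      = Complex.exp (Complex.I * (-1) * (φ:ℂ)) := by
    rw [← Complex.exp_add]; congr 1; ring
  have hp1 : Complex.exp (Complex.I * 1 * (φ:ℂ)) * Complex.exp (-Complex.I * φ)
      = Complex.exp (Complex.I * 0 * (φ:ℂ)) := by
    rw [← Complex.exp_add]; congr 1; ring
  have hp2 : Complex.exp (Complex.I * 2 * (φ:ℂ)) * Complex.exp (-Complex.I * φ)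
      = Complex.exp (Complex.I * 1 * (φ:ℂ)) := by
    rw [← Complex.exp_add]; congr 1; ring
  have hp3 : Complex.exp (Complex.I * 3 * (φ:ℂ)) * Complex.exp (-Complex.I * φ)
      = Complex.exp (Complex.I * 2 * (φ:ℂ)) := by
    rw [← Complex.exp_add]; congr 1; ring
  have hrw : Φ φ - (φ:ℂ) =
      -Complex.I * ((1/60 : ℂ) * ((Complex.exp (Complex.I * (-2) * φ) - Tp (Complex.I * (-2) * φ))
            - (Complex.exp (Complex.I * (-3) * φ) - Tp (Complex.I * (-3) * φ)))
        + (-8/60 : ℂ) * ((Complex.exp (Complex.I * (-1) * φ) - Tp (Complex.I * (-1) * φ))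
            - (Complex.exp (Complex.I * (-2) * φ) - Tp (Complex.I * (-2) * φ)))
        + (37/60 : ℂ) * ((Complex.exp (Complex.I * 0 * φ) - Tp (Complex.I * 0 * φ))
            - (Complex.exp (Complex.I * (-1) * φ) - Tp (Complex.I * (-1) * φ)))
        + (37/60 : ℂ) * ((Complex.exp (Complex.I * 1 * φ) - Tp (Complex.I * 1 * φ))
            - (Complex.exp (Complex.I * 0 * φ) - Tp (Complex.I * 0 * φ)))
        + (-8/60 : ℂ) * ((Complex.exp (Complex.I * 2 * φ) - Tp (Complex.I * 2 * φ))
            - (Complex.exp (Complex.I * 1 * φ) - Tp (Complex.I * 1 * φ)))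
        + (1/60 : ℂ) * ((Complex.exp (Complex.I * 3 * φ) - Tp (Complex.I * 3 * φ))
            - (Complex.exp (Complex.I * 2 * φ) - Tp (Complex.I * 2 * φ)))) := by
    rw [key φ]
    linear_combination (Complex.I * (1/60 : ℂ)) * h2 + (Complex.I * (-8/60 : ℂ)) * h1
      + (Complex.I * (37/60 : ℂ)) * h0 + (Complex.I * (37/60 : ℂ)) * hp1
      + (Complex.I * (-8/60 : ℂ)) * hp2 + (Complex.I * (1/60 : ℂ)) * hp3 + hT (φ:ℂ)
  -- remainder bounds
  have B : ∀ m : ℝ, |m| ≤ 3 →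
      ‖Complex.exp (Complex.I * (m:ℂ) * (φ:ℂ)) - Tp (Complex.I * m * φ)‖ ≤ 2187 * |φ|^7 :=
    fun m hm => rem_bound hm hφ
  have b3 := B (-3) (by norm_num)
  have b2 := B (-2) (by norm_num)
  have b1 := B (-1) (by norm_num)
  have b0 := B 0 (by norm_num)
  have c1 := B 1 (by norm_num)
  have c2 := B 2 (by norm_num)
  have c3 := B 3 (by norm_num)
  push_cast at b3 b2 b1 b0 c1 c2 c3
  rw [hrw]
  have hnorm : ‖(φ:ℝ)^7‖ = |φ|^7 := by
    rw [Real.norm_eq_abs, abs_pow]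
  rw [hnorm]
  set E3 := Complex.exp (Complex.I * (-3) * (φ:ℂ)) - Tp (Complex.I * (-3) * φ) with hE3
  set E2 := Complex.exp (Complex.I * (-2) * (φ:ℂ)) - Tp (Complex.I * (-2) * φ) with hE2
  set E1 := Complex.exp (Complex.I * (-1) * (φ:ℂ)) - Tp (Complex.I * (-1) * φ) with hE1
  set E0 := Complex.exp (Complex.I * 0 * (φ:ℂ)) - Tp (Complex.I * 0 * φ) with hE0
  set F1 := Complex.exp (Complex.I * 1 * (φ:ℂ)) - Tp (Complex.I * 1 * φ) with hF1
  set F2 := Complex.exp (Complex.I * 2 * (φ:ℂ)) - Tp (Complex.I * 2 * φ) with hF2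
  set F3 := Complex.exp (Complex.I * 3 * (φ:ℂ)) - Tp (Complex.I * 3 * φ) with hF3
  have tri : ‖-Complex.I * ((1/60 : ℂ) * (E2 - E3) + (-8/60 : ℂ) * (E1 - E2)
      + (37/60 : ℂ) * (E0 - E1) + (37/60 : ℂ) * (F1 - E0)
      + (-8/60 : ℂ) * (F2 - F1) + (1/60 : ℂ) * (F3 - F2))‖
      ≤ (1/60) * (‖E2‖ + ‖E3‖) + (8/60) * (‖E1‖ + ‖E2‖) + (37/60) * (‖E0‖ + ‖E1‖)
        + (37/60) * (‖F1‖ + ‖E0‖) + (8/60) * (‖F2‖ + ‖F1‖) + (1/60) * (‖F3‖ + ‖F2‖) := by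
    rw [norm_mul]
    simp only [norm_neg, Complex.norm_I, one_mul]
    refine le_trans (norm_add_le _ _) ?_
    gcongr ?_ + ?_
    · refine le_trans (norm_add_le _ _) ?_
      gcongr ?_ + ?_
      · refine le_trans (norm_add_le _ _) ?_
        gcongr ?_ + ?_
        · refine le_trans (norm_add_le _ _) ?_
          gcongr ?_ + ?_
          · refine le_trans (norm_add_le _ _) ?_
            gcongr ?_ + ?_
            · rw [norm_mul]
              refine le_trans (mul_le_mul_of_nonneg_left (norm_sub_le _ _) (norm_nonneg _)) ?_
              norm_num
            · rw [norm_mul]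
              refine le_trans (mul_le_mul_of_nonneg_left (norm_sub_le _ _) (norm_nonneg _)) ?_
              norm_num
          · rw [norm_mul]
            refine le_trans (mul_le_mul_of_nonneg_left (norm_sub_le _ _) (norm_nonneg _)) ?_
            norm_num
        · rw [norm_mul]
          refine le_trans (mul_le_mul_of_nonneg_left (norm_sub_le _ _) (norm_nonneg _)) ?_
          norm_num
      · rw [norm_mul]
        refine le_trans (mul_le_mul_of_nonneg_left (norm_sub_le _ _) (norm_nonneg _)) ?_
        norm_num
    · rw [norm_mul]
      refine le_trans (mul_le_mul_of_nonneg_left (norm_sub_le _ _) (norm_nonneg _)) ?_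
      norm_num
  refine tri.trans ?_
  have e3 : ‖E3‖ ≤ 2187 * |φ|^7 := by exact b3
  have e2 : ‖E2‖ ≤ 2187 * |φ|^7 := by exact b2
  have e1 : ‖E1‖ ≤ 2187 * |φ|^7 := by exact b1
  have e0 : ‖E0‖ ≤ 2187 * |φ|^7 := by exact b0
  have f1 : ‖F1‖ ≤ 2187 * |φ|^7 := by exact c1
  have f2 : ‖F2‖ ≤ 2187 * |φ|^7 := by exact c2
  have f3 : ‖F3‖ ≤ 2187 * |φ|^7 := by exact c3
  linarith [e3, e2, e1, e0, f1, f2, f3, pow_nonneg (abs_nonneg φ) 7]
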